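/- (Main Theorem.) Let (ρ, ψ, ψ₁, α) be a projective 2-representation of a group G on V. Then for all r, g, h ∈ G and every η ∈ X(r), β_{grg⁻¹,h}(β_{r,g}(η)) = (α(h,g,r) · α(hgrg⁻¹h⁻¹, h, g) · α(h, grg⁻¹, g)⁻¹) • β_{r,hg}(η); that is, the diagram formed by β_{r,hg} : X(r) → X(hgrg⁻¹h⁻¹) and the composite β_{grg⁻¹,h} ∘ β_{r,g} commutes up to the scalar factor α(h,g,r) · α(hgrg⁻¹h⁻¹,h,g) / α(h,grg⁻¹,g). -/

import Mathlib

open CategoryTheory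

/-- A projective 2-representation of a group `G` on a `k`-linear category `V`,
with cocycle data `α : G → G → G → kˣ`. -/
structure ProjTwoRep (k : Type*) [Field k] (G : Type*) [Group G]
    (V : Type*) [Category V] [Preadditive V] [CategoryTheory.Linear k V] where
  /-- the underlying functors -/
  ρ : G → V ⥤ V
  /-- each `ρ g` is an equivalence of categories -/
  equiv : ∀ g : G, (ρ g).IsEquivalence
  /-- the coherence isomorphisms `ψ_{g,h} : ρ h ⋙ ρ g ≅ ρ (g * h)` -/
  ψ : ∀ g h : G, ρ h ⋙ ρ g ≅ ρ (g * h)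
  /-- the unit isomorphism `ψ₁ : ρ 1 ≅ 𝟭 V` -/
  ψ₁ : ρ 1 ≅ 𝟭 V
  /-- the cocycle data -/
  α : G → G → G → kˣ
  /-- condition (i): `ψ_{g,hk} ∘ ρ(g)(ψ_{h,k}) = α(g,h,k) • (ψ_{gh,k} ∘ ψ_{g,h} ρ(k))` -/
  cond_i : ∀ (g h j : G) (X : V),
    (ρ g).map ((ψ h j).hom.app X) ≫ (ψ g (h * j)).hom.app X ≫
        eqToHom (by rw [mul_assoc]) =
      ((α g h j : kˣ) : k) •
        ((ψ g h).hom.app ((ρ j).obj X) ≫ (ψ (g * h) j).hom.app X)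
  /-- condition (ii), left part: `(ψ_{1,g})_X = (ψ₁)_{ρ(g)(X)}` -/
  cond_ii_left : ∀ (g : G) (X : V),
    (ψ 1 g).hom.app X = ψ₁.hom.app ((ρ g).obj X) ≫ eqToHom (by rw [one_mul]; rfl)
  /-- condition (ii), right part: `(ψ_{g,1})_X = ρ(g)((ψ₁)_X)` -/
  cond_ii_right : ∀ (g : G) (X : V),
    (ψ g 1).hom.app X = (ρ g).map (ψ₁.hom.app X) ≫ eqToHom (by rw [mul_one]; rfl)

variable {k : Type*} [Field k] {G : Type*} [Group G]
variable {V : Type*} [Category V] [Preadditive V] [CategoryTheory.Linear k V]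

/-- The categorical character structure map `β_{g,h} : X(g) → X(hgh⁻¹)`, sending a
natural transformation `η : 𝟭 V ⟶ ρ g` to the composite described in
Definition 3.? (string diagram `img36`). -/
def charBeta (ρ : G → V ⥤ V) (ψ : ∀ g h : G, ρ h ⋙ ρ g ≅ ρ (g * h))
    (ψ₁ : ρ 1 ≅ 𝟭 V) (g h : G) (η : 𝟭 V ⟶ ρ g) : 𝟭 V ⟶ ρ (h * g * h⁻¹) :=
  ψ₁.inv ≫
  eqToHom (show ρ 1 = ρ (h * h⁻¹) by rw [mul_inv_cancel]) ≫
  (ψ h h⁻¹).inv ≫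
  Functor.whiskerLeft (ρ h⁻¹) (Functor.whiskerRight η (ρ h)) ≫
  Functor.whiskerLeft (ρ h⁻¹) (ψ h g).hom ≫
  eqToHom (show ρ h⁻¹ ⋙ ρ (h * g) = ρ h⁻¹ ⋙ ρ (h * g * h⁻¹ * h) by
    rw [inv_mul_cancel_right]) ≫
  Functor.whiskerLeft (ρ h⁻¹) (ψ (h * g * h⁻¹) h).inv ≫
  Functor.whiskerRight (ψ h h⁻¹).hom (ρ (h * g * h⁻¹)) ≫
  eqToHom (show ρ (h * h⁻¹) ⋙ ρ (h * g * h⁻¹) = ρ 1 ⋙ ρ (h * g * h⁻¹) by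
    rw [mul_inv_cancel]) ≫
  Functor.whiskerRight ψ₁.hom (ρ (h * g * h⁻¹))


section Helpers

set_option linter.unusedSectionVars false
set_option maxHeartbeats 1000000

variable (P : ProjTwoRep k G V)

lemma psi_congr {a b c d : G} (h1 : a = c) (h2 : b = d) (X : V) :
    (P.ψ a b).hom.app X =
      eqToHom (by rw [h1, h2]) ≫ (P.ψ c d).hom.app X ≫ eqToHom (by rw [h1, h2]) := by
  subst h1; subst h2; simp

lemma psi_inv_congr {a b c d : G} (h1 : a = c) (h2 : b = d) (X : V) :
    (P.ψ a b).inv.app X =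
      eqToHom (by rw [h1, h2]) ≫ (P.ψ c d).inv.app X ≫ eqToHom (by rw [h1, h2]) := by
  subst h1; subst h2; simp

lemma rho_map_congr {a b : G} (e : a = b) {X Y : V} (f : X ⟶ Y) :
    (P.ρ a).map f ≫ eqToHom (by rw [e]) = eqToHom (by rw [e]) ≫ (P.ρ b).map f := by
  subst e; simp

lemma charBeta_app (p y : G) (χ : 𝟭 V ⟶ P.ρ p) (B : V) :
    (charBeta P.ρ P.ψ P.ψ₁ p y χ).app B =
      P.ψ₁.inv.app B ≫ eqToHom (show (P.ρ 1).obj B = (P.ρ (y * y⁻¹)).obj B by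
          rw [mul_inv_cancel]) ≫
      (P.ψ y y⁻¹).inv.app B ≫
      (P.ρ y).map (χ.app ((P.ρ y⁻¹).obj B)) ≫
      (P.ψ y p).hom.app ((P.ρ y⁻¹).obj B) ≫
      eqToHom (show (P.ρ (y * p)).obj ((P.ρ y⁻¹).obj B) =
          (P.ρ (y * p * y⁻¹ * y)).obj ((P.ρ y⁻¹).obj B) by rw [inv_mul_cancel_right]) ≫
      (P.ψ (y * p * y⁻¹) y).inv.app ((P.ρ y⁻¹).obj B) ≫
      (P.ρ (y * p * y⁻¹)).map ((P.ψ y y⁻¹).hom.app B) ≫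
      eqToHom (show (P.ρ (y * p * y⁻¹)).obj ((P.ρ (y * y⁻¹)).obj B) =
          (P.ρ (y * p * y⁻¹)).obj ((P.ρ 1).obj B) by rw [mul_inv_cancel]) ≫
      (P.ρ (y * p * y⁻¹)).map (P.ψ₁.hom.app B) := by
  simp [charBeta, eqToHom_app, eqToHom_map]

end Helpers

section Core
set_option linter.unusedSectionVars false
set_option maxHeartbeats 1000000
variable (P : ProjTwoRep k G V)

lemma charBeta_app_conj (p y : G) (χ : 𝟭 V ⟶ P.ρ p) (B : V) :
    (charBeta P.ρ P.ψ P.ψ₁ p y χ).app ((P.ρ y).obj ((P.ρ y⁻¹).obj B)) =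
      (P.ρ y).map (χ.app ((P.ρ y⁻¹).obj B)) ≫
      (P.ψ y p).hom.app ((P.ρ y⁻¹).obj B) ≫
      eqToHom (show (P.ρ (y * p)).obj ((P.ρ y⁻¹).obj B) =
          (P.ρ (y * p * y⁻¹ * y)).obj ((P.ρ y⁻¹).obj B) by rw [inv_mul_cancel_right]) ≫
      (P.ψ (y * p * y⁻¹) y).inv.app ((P.ρ y⁻¹).obj B) := by
  set μ := charBeta P.ρ P.ψ P.ψ₁ p y χ with hμ
  -- the cup σ : [y][y⁻¹]B ⟶ B
  set σ : (P.ρ y).obj ((P.ρ y⁻¹).obj B) ⟶ B :=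
    (P.ψ y y⁻¹).hom.app B ≫ eqToHom (show (P.ρ (y * y⁻¹)).obj B = (P.ρ 1).obj B by
      rw [mul_inv_cancel]) ≫ P.ψ₁.hom.app B with hσ
  have hnat := μ.naturality σ
  simp only [Functor.id_map] at hnat
  -- hnat : σ ≫ μ.app B = μ.app ([y][y⁻¹]B) ≫ (ρ (y*p*y⁻¹)).map σ
  have hiso : IsIso ((P.ρ (y * p * y⁻¹)).map σ) := by
    have : IsIso σ := by rw [hσ]; infer_instance
    infer_instance
  rw [← cancel_mono ((P.ρ (y * p * y⁻¹)).map σ)]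
  rw [← hnat]
  rw [charBeta_app]
  simp [hσ, Functor.map_comp, eqToHom_map]
end Core

section Core2
set_option linter.unusedSectionVars false
set_option maxHeartbeats 1000000
variable (P : ProjTwoRep k G V)

/-- The CORE identity: the value of `charBeta p y χ` at any object `[y]X`. -/
lemma charBeta_app_rho (p y : G) (χ : 𝟭 V ⟶ P.ρ p) (X : V) :
    (charBeta P.ρ P.ψ P.ψ₁ p y χ).app ((P.ρ y).obj X) =
      (P.ρ y).map (χ.app X) ≫
      (P.ψ y p).hom.app X ≫
      eqToHom (show (P.ρ (y * p)).obj X = (P.ρ (y * p * y⁻¹ * y)).obj X by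
        rw [inv_mul_cancel_right]) ≫
      (P.ψ (y * p * y⁻¹) y).inv.app X := by
  set μ := charBeta P.ρ P.ψ P.ψ₁ p y χ with hμ
  set τ : (P.ρ y⁻¹).obj ((P.ρ y).obj X) ⟶ X :=
    (P.ψ y⁻¹ y).hom.app X ≫ eqToHom (show (P.ρ (y⁻¹ * y)).obj X = (P.ρ 1).obj X by
      rw [inv_mul_cancel]) ≫ P.ψ₁.hom.app X with hτ
  have hτiso : IsIso τ := by rw [hτ]; infer_instance
  have hnat := μ.naturality ((P.ρ y).map τ)
  simp only [Functor.id_map] at hnat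
  have c1 := charBeta_app_conj P p y χ ((P.ρ y).obj X)
  rw [← cancel_epi ((P.ρ y).map τ), hnat, hμ, c1]
  have n1 := (P.ψ (y * p * y⁻¹) y).inv.naturality τ
  simp only [Functor.comp_map] at n1
  have n2 := (P.ψ y p).hom.naturality τ
  simp only [Functor.comp_map] at n2
  have n3 := χ.naturality τ
  simp only [Functor.id_map] at n3
  slice_lhs 4 5 => rw [← n1]
  slice_lhs 3 4 => rw [← rho_map_congr P (show y * p = y * p * y⁻¹ * y by
    rw [inv_mul_cancel_right]) τ]
  slice_lhs 2 3 => rw [← n2]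
  slice_lhs 1 2 => rw [← Functor.map_comp, ← n3, Functor.map_comp]
  simp only [Category.assoc]

end Core2

section Conds
set_option linter.unusedSectionVars false
set_option maxHeartbeats 1000000
variable (P : ProjTwoRep k G V)

/-- cond_i, solved form C: `[x]ψ_{y,z} ≫ ψ_{x,yz} = α • (ψ_{x,y} ≫ ψ_{xy,z} ≫ eq)`. -/
lemma condC (x y z : G) (X : V) :
    (P.ρ x).map ((P.ψ y z).hom.app X) ≫ (P.ψ x (y * z)).hom.app X =
      ((P.α x y z : kˣ) : k) •
        ((P.ψ x y).hom.app ((P.ρ z).obj X) ≫ (P.ψ (x * y) z).hom.app X ≫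
          eqToHom (show (P.ρ (x * y * z)).obj X = (P.ρ (x * (y * z))).obj X by
            rw [mul_assoc])) := by
  have C := P.cond_i x y z X
  rw [← cancel_mono (eqToHom (show (P.ρ (x * (y * z))).obj X = (P.ρ (x * y * z)).obj X by
    rw [mul_assoc]))]
  simp only [Category.assoc, eqToHom_trans, eqToHom_refl, Category.comp_id,
    Linear.smul_comp] at C ⊢
  exact C

/-- cond_i, solved form A: `[x]ψ_{y,z}⁻¹ ≫ ψ_{x,y} = α⁻¹ • (ψ_{x,yz} ≫ eq ≫ ψ_{xy,z}⁻¹)`. -/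
lemma condA (x y z : G) (X : V) :
    (P.ρ x).map ((P.ψ y z).inv.app X) ≫ (P.ψ x y).hom.app ((P.ρ z).obj X) =
      (((P.α x y z)⁻¹ : kˣ) : k) •
        ((P.ψ x (y * z)).hom.app X ≫
          eqToHom (show (P.ρ (x * (y * z))).obj X = (P.ρ (x * y * z)).obj X by
            rw [mul_assoc]) ≫ (P.ψ (x * y) z).inv.app X) := by
  rw [← cancel_mono ((P.ψ (x * y) z).hom.app X), ← cancel_epi ((P.ρ x).map ((P.ψ y z).hom.app X))]
  simp only [Category.assoc, Iso.inv_hom_id_app, Category.comp_id, Linear.comp_smul,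
    Linear.smul_comp]
  rw [← Functor.map_comp_assoc]
  simp only [Iso.hom_inv_id_app, Functor.map_id, Category.id_comp]
  rw [← Category.assoc ((P.ρ x).map ((P.ψ y z).hom.app X)), condC P x y z X]
  simp [smul_smul, Units.val_inv_eq_inv_val]

/-- cond_i, solved form B: `ψ_{x,y}⁻¹ ≫ [x]ψ_{y,z} = α • (ψ_{xy,z} ≫ eq ≫ ψ_{x,yz}⁻¹)`. -/
lemma condB (x y z : G) (X : V) :
    (P.ψ x y).inv.app ((P.ρ z).obj X) ≫ (P.ρ x).map ((P.ψ y z).hom.app X) =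
      ((P.α x y z : kˣ) : k) •
        ((P.ψ (x * y) z).hom.app X ≫
          eqToHom (show (P.ρ (x * y * z)).obj X = (P.ρ (x * (y * z))).obj X by
            rw [mul_assoc]) ≫ (P.ψ x (y * z)).inv.app X) := by
  rw [← cancel_mono ((P.ψ x (y * z)).hom.app X), ← cancel_epi ((P.ψ x y).hom.app ((P.ρ z).obj X))]
  have C := condC P x y z X
  simp only [Category.assoc, Iso.inv_hom_id_app, Category.comp_id, Linear.smul_comp,
    Linear.comp_smul, Iso.hom_inv_id_app_assoc] at C ⊢
  rw [C]

end Conds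

section CondsPrime
set_option linter.unusedSectionVars false
variable (P : ProjTwoRep k G V)

lemma condC' (x y z : G) (X : V) {Z : V} (f : (P.ρ (x * (y * z))).obj X ⟶ Z) :
    (P.ρ x).map ((P.ψ y z).hom.app X) ≫ (P.ψ x (y * z)).hom.app X ≫ f =
      ((P.α x y z : kˣ) : k) •
        ((P.ψ x y).hom.app ((P.ρ z).obj X) ≫ (P.ψ (x * y) z).hom.app X ≫
          eqToHom (show (P.ρ (x * y * z)).obj X = (P.ρ (x * (y * z))).obj X by
            rw [mul_assoc]) ≫ f) := by
  rw [← Category.assoc, condC P x y z X]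
  simp only [Linear.smul_comp, Category.assoc]

lemma condA' (x y z : G) (X : V) {Z : V} (f : (P.ρ (x * y)).obj ((P.ρ z).obj X) ⟶ Z) :
    (P.ρ x).map ((P.ψ y z).inv.app X) ≫ (P.ψ x y).hom.app ((P.ρ z).obj X) ≫ f =
      (((P.α x y z)⁻¹ : kˣ) : k) •
        ((P.ψ x (y * z)).hom.app X ≫
          eqToHom (show (P.ρ (x * (y * z))).obj X = (P.ρ (x * y * z)).obj X by
            rw [mul_assoc]) ≫ (P.ψ (x * y) z).inv.app X ≫ f) := by
  rw [← Category.assoc, condA P x y z X]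
  simp only [Linear.smul_comp, Category.assoc]

lemma condB' (x y z : G) (X : V) {Z : V} (f : (P.ρ x).obj ((P.ρ (y * z)).obj X) ⟶ Z) :
    (P.ψ x y).inv.app ((P.ρ z).obj X) ≫ (P.ρ x).map ((P.ψ y z).hom.app X) ≫ f =
      ((P.α x y z : kˣ) : k) •
        ((P.ψ (x * y) z).hom.app X ≫
          eqToHom (show (P.ρ (x * y * z)).obj X = (P.ρ (x * (y * z))).obj X by
            rw [mul_assoc]) ≫ (P.ψ x (y * z)).inv.app X ≫ f) := by
  rw [← Category.assoc, condB P x y z X]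
  simp only [Linear.smul_comp, Category.assoc]

end CondsPrime

section MainGlue
set_option linter.unusedSectionVars false
set_option maxHeartbeats 1000000

lemma natTrans_ext_of_equiv (F : V ⥤ V) (hF : F.IsEquivalence) {Fc : V ⥤ V}
    (χ₁ χ₂ : 𝟭 V ⟶ Fc) (H : ∀ X, χ₁.app (F.obj X) = χ₂.app (F.obj X)) : χ₁ = χ₂ := by
  letI := hF
  ext Z
  have e := F.objObjPreimageIso Z
  have h1 := χ₁.naturality e.hom
  have h2 := χ₂.naturality e.hom
  simp only [Functor.id_map] at h1 h2
  calc χ₁.app Z = e.inv ≫ (e.hom ≫ χ₁.app Z) := by simp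
    _ = e.inv ≫ χ₁.app (F.obj (F.objPreimage Z)) ≫ Fc.map e.hom := by rw [← h1]
    _ = e.inv ≫ χ₂.app (F.obj (F.objPreimage Z)) ≫ Fc.map e.hom := by rw [H]
    _ = e.inv ≫ (e.hom ≫ χ₂.app Z) := by rw [h2]
    _ = χ₂.app Z := by simp

variable (P : ProjTwoRep k G V)

lemma main_component (r g h : G) (η : 𝟭 V ⟶ P.ρ r) (Y : V) :
    (charBeta P.ρ P.ψ P.ψ₁ (g * r * g⁻¹) h (charBeta P.ρ P.ψ P.ψ₁ r g η)).app
        ((P.ρ (h * g)).obj Y) =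
      ((P.α h g r * P.α (h * (g * r * g⁻¹) * h⁻¹) h g *
          (P.α h (g * r * g⁻¹) g)⁻¹ : kˣ) : k) •
        ((charBeta P.ρ P.ψ P.ψ₁ r (h * g) η).app ((P.ρ (h * g)).obj Y) ≫
          eqToHom (show (P.ρ (h * g * r * (h * g)⁻¹)).obj ((P.ρ (h * g)).obj Y) =
              (P.ρ (h * (g * r * g⁻¹) * h⁻¹)).obj ((P.ρ (h * g)).obj Y) by
            rw [show h * g * r * (h * g)⁻¹ = h * (g * r * g⁻¹) * h⁻¹ by
                simp only [mul_inv_rev, mul_assoc]])) := by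
  set ν := charBeta P.ρ P.ψ P.ψ₁ (g * r * g⁻¹) h (charBeta P.ρ P.ψ P.ψ₁ r g η) with hν
  have hu := ν.naturality ((P.ψ h g).hom.app Y)
  simp only [Functor.id_map, Functor.comp_obj] at hu
  rw [← cancel_epi ((P.ψ h g).hom.app Y), hu, hν]
  rw [charBeta_app_rho P (g * r * g⁻¹) h (charBeta P.ρ P.ψ P.ψ₁ r g η) ((P.ρ g).obj Y)]
  rw [charBeta_app_rho P r g η Y]
  rw [charBeta_app_rho P r (h * g) η Y]
  simp only [Functor.map_comp, Category.assoc, eqToHom_map]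
  rw [condA' P h (g * r * g⁻¹) g Y]
  simp only [Linear.smul_comp, Linear.comp_smul, Category.assoc]
  rw [psi_congr P (rfl : h = h) (show (g * r * g⁻¹) * g = g * r by rw [inv_mul_cancel_right]) Y]
  simp only [Category.assoc, eqToHom_trans, eqToHom_trans_assoc, eqToHom_refl,
    Category.id_comp, Category.comp_id]
  rw [condC' P h g r Y]
  simp only [Linear.smul_comp, Linear.comp_smul, Category.assoc, smul_smul]
  have n6 := (P.ψ h g).hom.naturality (η.app Y)
  simp only [Functor.comp_map] at n6
  rw [reassoc_of% n6]
  rw [condB P (h * (g * r * g⁻¹) * h⁻¹) h g Y]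
  rw [psi_congr P (show h * (g * r * g⁻¹) * h⁻¹ * h = h * (g * r * g⁻¹) by rw [inv_mul_cancel_right])
    (rfl : g = g) Y]
  rw [psi_inv_congr P (show h * g * r * (h * g)⁻¹ = h * (g * r * g⁻¹) * h⁻¹ by
    simp only [mul_inv_rev, mul_assoc])
    (rfl : (h * g) = h * g) Y]
  simp only [Linear.smul_comp, Linear.comp_smul, Category.assoc, smul_smul,
    eqToHom_trans, eqToHom_trans_assoc, eqToHom_refl, Category.id_comp, Category.comp_id,
    Iso.inv_hom_id_app_assoc]
  congr 1
  simp only [Units.val_mul, Units.val_inv_eq_inv_val]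
  ring

end MainGlue
set_option maxHeartbeats 1000000 in
/-- **Main Theorem.** The categorical character maps `β` of a projective
2-representation compose according to the transgressed cocycle: for all `r, g, h`
and `η ∈ X(r)`,
`β_{grg⁻¹,h}(β_{r,g}(η)) = (α(h,g,r)·α(hgrg⁻¹h⁻¹,h,g)·α(h,grg⁻¹,g)⁻¹) • β_{r,hg}(η)`. -/
theorem ProjTwoRep.char_main {k : Type*} [Field k] {G : Type*} [Group G]
    {V : Type*} [Category V] [Preadditive V] [CategoryTheory.Linear k V]
    (P : ProjTwoRep k G V) (r g h : G) (η : 𝟭 V ⟶ P.ρ r) :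
    charBeta P.ρ P.ψ P.ψ₁ (g * r * g⁻¹) h (charBeta P.ρ P.ψ P.ψ₁ r g η) =
      ((P.α h g r * P.α (h * (g * r * g⁻¹) * h⁻¹) h g *
          (P.α h (g * r * g⁻¹) g)⁻¹ : kˣ) : k) •
        (charBeta P.ρ P.ψ P.ψ₁ r (h * g) η ≫
          eqToHom (show P.ρ (h * g * r * (h * g)⁻¹) = P.ρ (h * (g * r * g⁻¹) * h⁻¹) by
            rw [show h * g * r * (h * g)⁻¹ = h * (g * r * g⁻¹) * h⁻¹ by group])) := by
  letI : (P.ρ (h * g)).IsEquivalence := P.equiv (h * g)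
  apply natTrans_ext_of_equiv (P.ρ (h * g)) inferInstance
  intro Y
  rw [NatTrans.app_smul, NatTrans.comp_app, eqToHom_app]
  exact main_component P r g h η Y
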